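/- Let x₀ ∈ ℝⁿ and let f(y) = |y−x₀|^{(αs−n)/(s−1)}. For x ∈ ℝⁿ with x ≠ x₀, let j_x be the unique integer with 2^{j_x} ≤ |x−x₀| < 2^{j_x+1}, and set B_k = B(x₀, 2^k). Then for every integer m ≥ 1 and every x ≠ x₀, 𝒩^m(f)(x) ≥ ( ((s−1)/(n−αs)) · 8^{(αs−n)/(s−1)} )^m · |x−x₀|^{(αs−n)/(s−1)} · ( (1/m!) · ( Σ_{k=−∞}^{j_x} 2^{k(αs−n)} · σ(B_{k+1} \ B_k) )^m )^{1/(s−1)}. -/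

import Mathlib

open MeasureTheory Metric Set Filter
open scoped ENNReal NNReal Topology

noncomputable section

/-- `n`-dimensional Euclidean space. -/
abbrev En (n : ℕ) : Type := EuclideanSpace ℝ (Fin n)

/-- The truncated Wolff potential
`W^ρ_{α,s} μ (x) = ∫_0^ρ (μ(B(x,r))/r^{n-αs})^{1/(s-1)} dr/r`. -/
noncomputable def wolffT (n : ℕ) (α s : ℝ) (μ : Measure (En n)) (ρ : ℝ) (x : En n) : ℝ≥0∞ :=
  ∫⁻ r in Set.Ioo (0:ℝ) ρ,
    (μ (Metric.ball x r) / ENNReal.ofReal (r ^ ((n:ℝ) - α * s))) ^ (1/(s-1))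
      * ENNReal.ofReal r⁻¹

/-- The (full) Wolff potential
`W_{α,s} μ (x) = ∫_0^∞ (μ(B(x,r))/r^{n-αs})^{1/(s-1)} dr/r`. -/
noncomputable def wolff (n : ℕ) (α s : ℝ) (μ : Measure (En n)) (x : En n) : ℝ≥0∞ :=
  ∫⁻ r in Set.Ioi (0:ℝ),
    (μ (Metric.ball x r) / ENNReal.ofReal (r ^ ((n:ℝ) - α * s))) ^ (1/(s-1))
      * ENNReal.ofReal r⁻¹

/-- The truncated Riesz-type potential
`I^ρ μ (x) = ∫_0^ρ (μ(B(x,r))/r^{n-αs}) dr/r`. -/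
noncomputable def rieszT (n : ℕ) (α s : ℝ) (μ : Measure (En n)) (ρ : ℝ) (x : En n) : ℝ≥0∞ :=
  ∫⁻ r in Set.Ioo (0:ℝ) ρ,
    (μ (Metric.ball x r) / ENNReal.ofReal (r ^ ((n:ℝ) - α * s))) * ENNReal.ofReal r⁻¹

/-- The nonlinear operator `𝒩 f (x) = W_{α,s}(f^{s-1} dσ)(x)`. -/
noncomputable def Nop (n : ℕ) (α s : ℝ) (σ : Measure (En n)) (f : En n → ℝ≥0∞) (x : En n) :
    ℝ≥0∞ :=
  ∫⁻ r in Set.Ioi (0:ℝ),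
    (ENNReal.ofReal (r ^ (α * s - (n:ℝ))) * ∫⁻ y in Metric.ball x r, (f y) ^ (s-1) ∂σ)
        ^ (1/(s-1))
      * ENNReal.ofReal r⁻¹

/-- The Riesz potential `I_α f (x) = (n-α)⁻¹ ∫ f(y) |x-y|^{α-n} dy`. -/
noncomputable def rieszPot (n : ℕ) (α : ℝ) (f : En n → ℝ≥0∞) (x : En n) : ℝ≥0∞ :=
  ENNReal.ofReal (((n:ℝ) - α)⁻¹) * ∫⁻ y, f y * ENNReal.ofReal (‖x - y‖ ^ (α - (n:ℝ)))

/-- The Riesz capacity `cap_{α,s}(A) = inf { ∫ f^s : f ≥ 0, I_α f ≥ 1 on A }`. -/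
noncomputable def rieszCap (n : ℕ) (α s : ℝ) (A : Set (En n)) : ℝ≥0∞ :=
  ⨅ (f : En n → ℝ≥0∞) (_ : Measurable f) (_ : ∀ x ∈ A, 1 ≤ rieszPot n α f x),
    ∫⁻ y, (f y) ^ s

/-- Extended exponential: `eexp x = exp x` for finite `x`, with `eexp ∞ = ∞`. -/
noncomputable def eexp (x : ℝ≥0∞) : ℝ≥0∞ :=
  if x = ∞ then ∞ else ENNReal.ofReal (Real.exp x.toReal)

lemma add_pow_succ_le (x a : ℝ≥0∞) (m : ℕ) :
    (x + a)^(m+1) ≤ x^(m+1) + (m+1) * a * (x+a)^m := by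
  induction m with
  | zero => simp [pow_succ]
  | succ m ih =>
    calc (x+a)^(m+1+1) = (x+a)^(m+1) * (x+a) := by ring
    _ ≤ (x^(m+1) + (m+1)*a*(x+a)^m) * (x+a) := mul_le_mul_left ih _
    _ = x^(m+1+1) + a * x^(m+1) + (m+1)*a*(x+a)^(m+1) := by ring
    _ ≤ x^(m+1+1) + a * (x+a)^(m+1) + (m+1)*a*(x+a)^(m+1) :=
        add_le_add_left (add_le_add_right
          (mul_le_mul_right (pow_le_pow_left' le_self_add _) a) _) _
    _ = x^(m+1+1) + (↑(m+1)+1)*a*(x+a)^(m+1) := by push_cast; ring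

lemma finset_telescope (a : ℤ → ℝ≥0∞) (S : ℤ → ℝ≥0∞)
    (hS : ∀ (F : Finset ℤ) (k : ℤ), (∀ j ∈ F, j ≤ k) → ∑ j ∈ F, a j ≤ S k)
    (m : ℕ) (F : Finset ℤ) :
    (∑ j ∈ F, a j)^(m+1) ≤ (m+1) * ∑ j ∈ F, a j * S j ^ m := by
  induction F using Finset.induction_on_max with
  | empty => simp
  | insert b F hb ih =>
    have hbF : b ∉ F := fun h => lt_irrefl b (hb b h)
    rw [Finset.sum_insert hbF, Finset.sum_insert hbF]
    have hSb : a b + ∑ j ∈ F, a j ≤ S b := by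
      rw [← Finset.sum_insert hbF]
      exact hS (insert b F) b (fun j hj => by
        rcases Finset.mem_insert.1 hj with h | h
        · exact le_of_eq h
        · exact (hb j h).le)
    calc (a b + ∑ j ∈ F, a j)^(m+1) = (∑ j ∈ F, a j + a b)^(m+1) := by rw [add_comm]
    _ ≤ (∑ j ∈ F, a j)^(m+1) + (m+1) * a b * (∑ j ∈ F, a j + a b)^m :=
        add_pow_succ_le _ _ _
    _ ≤ (m+1) * ∑ j ∈ F, a j * S j ^ m + (m+1) * a b * (S b)^m := by
        refine add_le_add ih (mul_le_mul_right (pow_le_pow_left' ?_ _) _)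
        rw [add_comm]; exact hSb
    _ = (m+1) * (a b * S b ^ m + ∑ j ∈ F, a j * S j ^ m) := by ring

lemma tsum_telescope (a : ℤ → ℝ≥0∞) (K : ℤ) (m : ℕ) :
    (∑' j : ℤ, if j ≤ K then a j else 0)^(m+1)
      ≤ (m+1) * ∑' j : ℤ, (if j ≤ K then a j * (∑' i : ℤ, if i ≤ j then a i else 0)^m else 0) := by
  set S : ℤ → ℝ≥0∞ := fun k => ∑' i : ℤ, if i ≤ k then a i else 0 with hSdef
  have key : ∀ F : Finset ℤ,
      (∑ j ∈ F, if j ≤ K then a j else 0)^(m+1)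
        ≤ (m+1) * ∑' j : ℤ, (if j ≤ K then a j * S j ^ m else 0) := by
    intro F
    have h1 : (∑ j ∈ F, if j ≤ K then a j else 0)
        = ∑ j ∈ F.filter (· ≤ K), a j := by
      rw [Finset.sum_filter]
    rw [h1]
    have h2 := finset_telescope a S (fun G k hGk => by
      refine le_trans ?_ (ENNReal.sum_le_tsum (f := fun i => if i ≤ k then a i else 0) G)
      exact le_of_eq (Finset.sum_congr rfl fun j hj => by simp [hGk j hj]).symm) m
        (F.filter (· ≤ K))
    refine h2.trans (mul_le_mul_right ?_ _)
    refine le_trans ?_ (ENNReal.sum_le_tsum (f := fun j => if j ≤ K then a j * S j ^ m else 0)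
      (F.filter (· ≤ K)))
    refine le_of_eq (Finset.sum_congr rfl fun j hj => ?_).symm
    simp [(Finset.mem_filter.1 hj).2]
  rw [ENNReal.tsum_eq_iSup_sum]
  have hpow : (⨆ F : Finset ℤ, ∑ j ∈ F, if j ≤ K then a j else 0)^(m+1)
      = ⨆ F : Finset ℤ, (∑ j ∈ F, if j ≤ K then a j else 0)^(m+1) := by
    refine Monotone.map_iSup_of_continuousAt ?_ (fun x y h => pow_le_pow_left' h _) (by simp)
    exact (ENNReal.continuous_pow (m+1)).continuousAt
  rw [hpow]
  exact iSup_le key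

lemma lintegral_rpow_Ioi {R γ : ℝ} (hR : 0 < R) (hγ : γ < 0) :
    ∫⁻ r in Set.Ioi R, ENNReal.ofReal (r ^ (γ - 1)) = ENNReal.ofReal (R ^ γ / (-γ)) := by
  rw [← ofReal_integral_eq_lintegral_ofReal
      (integrableOn_Ioi_rpow_of_lt (by linarith) hR)
      (ae_restrict_of_forall_mem measurableSet_Ioi fun r hr =>
        Real.rpow_nonneg (le_of_lt (hR.trans hr)) _)]
  rw [integral_Ioi_rpow_of_lt (by linarith) hR]
  congr 1
  have : γ - 1 + 1 = γ := by ring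
  rw [this]
  ring

lemma ofReal_rpow_anti {t u : ℝ} (ht : 0 < t) (htu : t ≤ u) {p : ℝ} (hp : p ≤ 0) :
    (ENNReal.ofReal u) ^ p ≤ (ENNReal.ofReal t) ^ p := by
  rw [ENNReal.ofReal_rpow_of_pos ht, ENNReal.ofReal_rpow_of_pos (ht.trans_le htu)]
  exact ENNReal.ofReal_le_ofReal (Real.rpow_le_rpow_of_nonpos ht htu hp)

lemma key_induction (n : ℕ) (α s : ℝ) (hs : 1 < s) (hα : 0 < α)
    (hαs : α * s < n) (σ : Measure (En n)) (x₀ : En n) (m : ℕ) :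
    ∀ (x : En n), x ≠ x₀ → ∀ (jx : ℤ), (2:ℝ)^jx ≤ ‖x - x₀‖ → ‖x - x₀‖ < (2:ℝ)^(jx+1) →
    ENNReal.ofReal (((s-1)/((n:ℝ) - α*s)) * (8:ℝ) ^ ((α*s-(n:ℝ))/(s-1))) ^ m
        * (ENNReal.ofReal ‖x - x₀‖) ^ ((α*s-(n:ℝ))/(s-1))
        * (((m.factorial : ℝ≥0∞))⁻¹
            * (∑' k : ℤ, if k ≤ jx then
                  ENNReal.ofReal ((2:ℝ) ^ ((k:ℝ) * (α*s-(n:ℝ))))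
                    * σ (Metric.ball x₀ ((2:ℝ)^(k+1)) \ Metric.ball x₀ ((2:ℝ)^k))
                else 0) ^ m) ^ (1/(s-1))
      ≤ (Nop n α s σ)^[m]
          (fun y => (ENNReal.ofReal ‖y - x₀‖) ^ ((α*s-(n:ℝ))/(s-1))) x := by
  have hs1 : (0:ℝ) < s - 1 := by linarith
  have hs1' : s - 1 ≠ 0 := ne_of_gt hs1
  set β : ℝ := α * s - (n:ℝ) with hβ
  have hβneg : β < 0 := by simp only [hβ]; linarith
  have hnα : (0:ℝ) < (n:ℝ) - α * s := by linarith
  set γ : ℝ := β / (s - 1) with hγ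
  have hγneg : γ < 0 := div_neg_of_neg_of_pos hβneg hs1
  have hγβ : γ * (s-1) = β := by rw [hγ]; exact div_mul_cancel₀ β hs1'
  have hβγ : β * (1/(s-1)) = γ := by rw [hγ, mul_one_div]
  set a : ℤ → ℝ≥0∞ := fun k =>
    ENNReal.ofReal ((2:ℝ) ^ ((k:ℝ) * β))
      * σ (Metric.ball x₀ ((2:ℝ)^(k+1)) \ Metric.ball x₀ ((2:ℝ)^k)) with ha
  set S : ℤ → ℝ≥0∞ := fun j => ∑' k : ℤ, if k ≤ j then a k else 0 with hS
  set C : ℝ≥0∞ := ENNReal.ofReal (((s-1)/((n:ℝ) - α*s)) * (8:ℝ) ^ γ) with hC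
  set f : En n → ℝ≥0∞ := fun y => (ENNReal.ofReal ‖y - x₀‖) ^ γ with hf
  induction m with
  | zero =>
    intro x hx jx h1 h2
    simp [Nat.factorial, hf]
  | succ m ih =>
    intro x hx jx hj1 hj2
    have hSfold : ∀ j : ℤ, (∑' k : ℤ, if k ≤ j then
        ENNReal.ofReal ((2:ℝ) ^ ((k:ℝ) * β))
          * σ (Metric.ball x₀ ((2:ℝ)^(k+1)) \ Metric.ball x₀ ((2:ℝ)^k)) else 0) = S j :=
      fun _ => rfl
    rw [hSfold]
    set g : En n → ℝ≥0∞ := (Nop n α s σ)^[m] f with hg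
    rw [Function.iterate_succ_apply']
    set R : ℝ := (2:ℝ)^(jx+2) with hRdef
    have hR : 0 < R := zpow_pos (by norm_num) _
    set M : ℝ≥0∞ := (C^m)^(s-1) * ENNReal.ofReal ((2:ℝ)^β)
        * (((m+1).factorial : ℝ≥0∞))⁻¹ * S jx ^ (m+1) with hM
    set A : ℤ → Set (En n) := fun k =>
      if k ≤ jx then Metric.ball x₀ ((2:ℝ)^(k+1)) \ Metric.ball x₀ ((2:ℝ)^k) else ∅ with hA
    have hAmeas : ∀ k, MeasurableSet (A k) := by
      intro k
      simp only [hA]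
      split
      · exact measurableSet_ball.diff measurableSet_ball
      · exact MeasurableSet.empty
    have hAdisj : Pairwise (Function.onFun Disjoint A) := by
      have key : ∀ {k l : ℤ}, k < l →
          Disjoint (Metric.ball x₀ ((2:ℝ)^(k+1)) \ Metric.ball x₀ ((2:ℝ)^k))
            (Metric.ball x₀ ((2:ℝ)^(l+1)) \ Metric.ball x₀ ((2:ℝ)^l)) := by
        intro k l hkl
        refine Set.disjoint_left.2 fun y hy1 hy2 => ?_
        have h1 : dist y x₀ < (2:ℝ)^(k+1) := hy1.1
        have h2 : ¬ dist y x₀ < (2:ℝ)^l := fun h => hy2.2 h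
        exact h2 (h1.trans_le (zpow_le_zpow_right₀ one_le_two (by omega)))
      intro k l hkl
      simp only [Function.onFun, hA]
      rcases lt_trichotomy k l with h | h | h
      · split <;> split
        · exact key h
        · exact Set.disjoint_empty _
        · exact Set.empty_disjoint _
        · exact Set.empty_disjoint _
      · exact absurd h hkl
      · split <;> split
        · exact (key h).symm
        · exact Set.disjoint_empty _
        · exact Set.empty_disjoint _
        · exact Set.empty_disjoint _
    have hAsub : ∀ r ∈ Set.Ioi R, (⋃ k, A k) ⊆ Metric.ball x r := by
      intro r hr y hy
      obtain ⟨k, hk⟩ := Set.mem_iUnion.1 hy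
      simp only [hA] at hk
      by_cases hkj : k ≤ jx
      · rw [if_pos hkj] at hk
        have h1 : dist y x₀ < (2:ℝ)^(k+1) := hk.1
        have h2 : (2:ℝ)^(k+1) ≤ (2:ℝ)^(jx+1) := zpow_le_zpow_right₀ one_le_two (by omega)
        have h3 : dist x x₀ < (2:ℝ)^(jx+1) := by rw [dist_eq_norm]; exact hj2
        have h4 : dist y x ≤ dist y x₀ + dist x x₀ := dist_triangle_right y x x₀
        have h5 : (2:ℝ)^(jx+1) + (2:ℝ)^(jx+1) = R := by
          have h : R = (2:ℝ)^(jx+1) * 2 := by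
            rw [hRdef, show jx+2 = (jx+1)+1 by ring]
            exact zpow_add_one₀ (two_ne_zero : (2:ℝ) ≠ 0) _
          rw [h, mul_two]
        have h6 : R < r := hr
        rw [Metric.mem_ball]
        linarith
      · rw [if_neg hkj] at hk; exact absurd hk (Set.notMem_empty _)
    set D : ℝ≥0∞ := (C^m)^(s-1) * ((m.factorial : ℝ≥0∞))⁻¹ * ENNReal.ofReal ((2:ℝ)^β) with hD
    have hann : ∀ k : ℤ, (if k ≤ jx then D * (a k * S k ^ m) else 0)
        ≤ ∫⁻ y in A k, (g y) ^ (s-1) ∂σ := by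
      intro k
      by_cases hk : k ≤ jx
      · rw [if_pos hk]
        have hAk : A k = Metric.ball x₀ ((2:ℝ)^(k+1)) \ Metric.ball x₀ ((2:ℝ)^k) := by
          simp only [hA, if_pos hk]
        have h2k : (0:ℝ) < (2:ℝ)^k := zpow_pos (by norm_num) _
        have hpt : ∀ y ∈ A k,
            D * (ENNReal.ofReal ((2:ℝ)^((k:ℝ)*β)) * S k ^ m) ≤ (g y)^(s-1) := by
          intro y hy
          rw [hAk] at hy
          have hy2 : ‖y - x₀‖ < (2:ℝ)^(k+1) := by
            have := hy.1; rwa [Metric.mem_ball, dist_eq_norm] at this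
          have hy1 : (2:ℝ)^k ≤ ‖y - x₀‖ := by
            have := hy.2
            rw [Metric.mem_ball, dist_eq_norm] at this
            exact not_lt.1 this
          have hy0 : y ≠ x₀ := by
            intro h
            rw [h, sub_self, norm_zero] at hy1
            linarith
          have hIH := ih y hy0 k hy1 hy2
          rw [hSfold] at hIH
          have hIH2 := ENNReal.rpow_le_rpow hIH (le_of_lt hs1)
          refine le_trans ?_ hIH2
          rw [ENNReal.mul_rpow_of_nonneg _ _ (le_of_lt hs1),
            ENNReal.mul_rpow_of_nonneg _ _ (le_of_lt hs1),
            ← ENNReal.rpow_mul, ← ENNReal.rpow_mul, hγβ, one_div,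
            inv_mul_cancel₀ hs1', ENNReal.rpow_one]
          have h0y : (0:ℝ) < ‖y - x₀‖ := lt_of_lt_of_le h2k hy1
          have hX : ENNReal.ofReal ((2:ℝ)^((k:ℝ)*β)) * ENNReal.ofReal ((2:ℝ)^β)
              ≤ (ENNReal.ofReal ‖y - x₀‖) ^ β := by
            have h1 : (ENNReal.ofReal ((2:ℝ)^(k+1)))^β ≤ (ENNReal.ofReal ‖y - x₀‖)^β :=
              ofReal_rpow_anti h0y hy2.le hβneg.le
            refine le_trans (le_of_eq ?_) h1
            rw [ENNReal.ofReal_rpow_of_pos (zpow_pos (by norm_num) _)]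
            rw [← ENNReal.ofReal_mul (Real.rpow_nonneg (by positivity) _)]
            congr 1
            rw [show ((2:ℝ)^(k+1)) = (2:ℝ)^(((k+1:ℤ)):ℝ) from (Real.rpow_intCast 2 (k+1)).symm,
              ← Real.rpow_mul (by norm_num : (0:ℝ) ≤ 2),
              show (((k+1:ℤ)):ℝ) * β = (k:ℝ)*β + β by push_cast; ring,
              Real.rpow_add (by norm_num : (0:ℝ) < 2)]
          calc D * (ENNReal.ofReal ((2:ℝ)^((k:ℝ)*β)) * S k ^ m)
              = (C^m)^(s-1) * (ENNReal.ofReal ((2:ℝ)^((k:ℝ)*β)) * ENNReal.ofReal ((2:ℝ)^β))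
                  * (((m.factorial:ℝ≥0∞))⁻¹ * S k ^ m) := by rw [hD]; ring
            _ ≤ (C^m)^(s-1) * (ENNReal.ofReal ‖y - x₀‖) ^ β
                  * (((m.factorial:ℝ≥0∞))⁻¹ * S k ^ m) :=
                mul_le_mul_left (mul_le_mul_right hX _) _
        have hak : a k = ENNReal.ofReal ((2:ℝ)^((k:ℝ)*β))
            * σ (Metric.ball x₀ ((2:ℝ)^(k+1)) \ Metric.ball x₀ ((2:ℝ)^k)) := rfl
        calc D * (a k * S k ^ m)
            = (D * (ENNReal.ofReal ((2:ℝ)^((k:ℝ)*β)) * S k ^ m)) * σ (A k) := by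
              rw [hak, hAk]; ring
          _ = ∫⁻ _ in A k, D * (ENNReal.ofReal ((2:ℝ)^((k:ℝ)*β)) * S k ^ m) ∂σ :=
              (setLIntegral_const _ _).symm
          _ ≤ ∫⁻ y in A k, (g y) ^ (s-1) ∂σ := setLIntegral_mono' (hAmeas k) hpt
      · rw [if_neg hk]; exact zero_le
    have hinner : ∀ r ∈ Set.Ioi R, M ≤ ∫⁻ y in Metric.ball x r, (g y) ^ (s-1) ∂σ := by
      intro r hr
      have step1 : ∑' k : ℤ, (if k ≤ jx then D * (a k * S k ^ m) else 0)
          ≤ ∫⁻ y in Metric.ball x r, (g y) ^ (s-1) ∂σ := by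
        calc ∑' k : ℤ, (if k ≤ jx then D * (a k * S k ^ m) else 0)
            ≤ ∑' k : ℤ, ∫⁻ y in A k, (g y) ^ (s-1) ∂σ := ENNReal.tsum_le_tsum hann
          _ = ∫⁻ y in ⋃ k, A k, (g y) ^ (s-1) ∂σ := (lintegral_iUnion hAmeas hAdisj _).symm
          _ ≤ ∫⁻ y in Metric.ball x r, (g y) ^ (s-1) ∂σ := lintegral_mono_set (hAsub r hr)
      refine le_trans ?_ step1
      have ht : ∑' k : ℤ, (if k ≤ jx then D * (a k * S k ^ m) else 0)
          = D * ∑' k : ℤ, (if k ≤ jx then a k * S k ^ m else 0) := by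
        rw [← ENNReal.tsum_mul_left]
        congr 1; funext k
        split <;> simp
      rw [ht]
      have hfac : (((m+1).factorial : ℝ≥0∞))⁻¹
          = ((m.factorial : ℝ≥0∞))⁻¹ * ((m:ℝ≥0∞)+1)⁻¹ := by
        rw [Nat.factorial_succ]
        push_cast
        rw [ENNReal.mul_inv (Or.inl (by simp)) (Or.inl (by simp)), mul_comm]
      set T : ℝ≥0∞ := ∑' k : ℤ, (if k ≤ jx then a k * S k ^ m else 0) with hT
      have htel : S jx ^ (m+1) ≤ ((m:ℝ≥0∞)+1) * T := tsum_telescope a jx m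
      rw [hM, hfac]
      calc (C^m)^(s-1) * ENNReal.ofReal ((2:ℝ)^β)
            * (((m.factorial:ℝ≥0∞))⁻¹ * ((m:ℝ≥0∞)+1)⁻¹) * S jx ^ (m+1)
          ≤ (C^m)^(s-1) * ENNReal.ofReal ((2:ℝ)^β)
            * (((m.factorial:ℝ≥0∞))⁻¹ * ((m:ℝ≥0∞)+1)⁻¹) * (((m:ℝ≥0∞)+1) * T) :=
            mul_le_mul_right htel _
        _ = D * ((((m:ℝ≥0∞)+1)⁻¹ * ((m:ℝ≥0∞)+1)) * T) := by rw [hD]; ring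
        _ = D * T := by
            rw [ENNReal.inv_mul_cancel (by simp) (by simp), one_mul]
    -- outer integral
    have hpt2 : ∀ r ∈ Set.Ioi R, M^(1/(s-1)) * ENNReal.ofReal (r^(γ-1))
        ≤ (ENNReal.ofReal (r ^ β) * ∫⁻ y in Metric.ball x r, (g y)^(s-1) ∂σ)^(1/(s-1))
            * ENNReal.ofReal r⁻¹ := by
      intro r hr
      have hr0 : (0:ℝ) < r := hR.trans hr
      have heq : M^(1/(s-1)) * ENNReal.ofReal (r^(γ-1))
          = (ENNReal.ofReal (r ^ β) * M)^(1/(s-1)) * ENNReal.ofReal r⁻¹ := by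
        have e1 : (ENNReal.ofReal (r ^ β)) ^ (1/(s-1)) = ENNReal.ofReal (r ^ γ) := by
          rw [ENNReal.ofReal_rpow_of_pos (Real.rpow_pos_of_pos hr0 β),
            ← Real.rpow_mul hr0.le, hβγ]
        have e2 : (ENNReal.ofReal (r ^ β) * M)^(1/(s-1))
            = ENNReal.ofReal (r ^ γ) * M^(1/(s-1)) := by
          rw [ENNReal.mul_rpow_of_nonneg (ENNReal.ofReal (r ^ β)) M
            (le_of_lt (one_div_pos.2 hs1)), e1]
        rw [e2]
        have hco : ENNReal.ofReal (r^γ) * ENNReal.ofReal r⁻¹ = ENNReal.ofReal (r^(γ-1)) := by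
          rw [← ENNReal.ofReal_mul (Real.rpow_nonneg hr0.le _)]
          congr 1
          rw [Real.rpow_sub hr0, Real.rpow_one, div_eq_mul_inv]
        rw [← hco]; ring
      rw [heq]
      exact mul_le_mul_left
        (ENNReal.rpow_le_rpow (mul_le_mul_right (hinner r hr) _)
          (le_of_lt (one_div_pos.2 hs1))) _
    have houter : M^(1/(s-1)) * ENNReal.ofReal (R^γ/(-γ)) ≤ Nop n α s σ g x := by
      have hmeas : Measurable fun r : ℝ => ENNReal.ofReal (r^(γ-1)) :=
        (measurable_id.pow_const _).ennreal_ofReal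
      calc M^(1/(s-1)) * ENNReal.ofReal (R^γ/(-γ))
          = ∫⁻ r in Set.Ioi R, M^(1/(s-1)) * ENNReal.ofReal (r^(γ-1)) := by
            rw [lintegral_const_mul _ hmeas, lintegral_rpow_Ioi hR hγneg]
        _ ≤ ∫⁻ r in Set.Ioi R,
              (ENNReal.ofReal (r ^ β) * ∫⁻ y in Metric.ball x r, (g y)^(s-1) ∂σ)^(1/(s-1))
                * ENNReal.ofReal r⁻¹ := setLIntegral_mono' measurableSet_Ioi hpt2
        _ ≤ Nop n α s σ g x := by
            rw [Nop, ← hβ]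
            exact lintegral_mono_set (Set.Ioi_subset_Ioi hR.le)
    refine le_trans ?_ houter
    -- final algebra
    have hp : (0:ℝ) ≤ 1/(s-1) := le_of_lt (one_div_pos.2 hs1)
    have q1 : ((C^m)^(s-1))^(1/(s-1)) = C^m := by
      rw [← ENNReal.rpow_mul, mul_one_div, div_self hs1', ENNReal.rpow_one]
    have q2 : (ENNReal.ofReal ((2:ℝ)^β))^(1/(s-1)) = ENNReal.ofReal ((2:ℝ)^γ) := by
      rw [ENNReal.ofReal_rpow_of_pos (Real.rpow_pos_of_pos (by norm_num) β),
        ← Real.rpow_mul (by norm_num : (0:ℝ) ≤ 2), hβγ]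
    have p1 : M^(1/(s-1)) = C^m * ENNReal.ofReal ((2:ℝ)^γ)
        * ((((m+1).factorial:ℝ≥0∞))⁻¹ * S jx^(m+1))^(1/(s-1)) := by
      rw [hM, show (C ^ m) ^ (s - 1) * ENNReal.ofReal ((2:ℝ)^β)
          * (((m+1).factorial:ℝ≥0∞))⁻¹ * S jx ^ (m+1)
          = ((C ^ m) ^ (s-1)) * ((ENNReal.ofReal ((2:ℝ)^β))
            * ((((m+1).factorial:ℝ≥0∞))⁻¹ * S jx ^ (m+1))) from by ring,
        ENNReal.mul_rpow_of_nonneg ((C^m)^(s-1)) _ hp,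
        ENNReal.mul_rpow_of_nonneg (ENNReal.ofReal ((2:ℝ)^β)) _ hp, q1, q2, mul_assoc]
    rw [p1]
    have hcnn : (0:ℝ) ≤ (s-1)/((n:ℝ) - α*s) * (8:ℝ)^γ :=
      mul_nonneg (div_nonneg hs1.le hnα.le) (Real.rpow_pos_of_pos (by norm_num) γ).le
    have hx2 : (ENNReal.ofReal ‖x - x₀‖)^γ ≤ ENNReal.ofReal ((2:ℝ)^((jx:ℝ)*γ)) := by
      have h2jx : (0:ℝ) < (2:ℝ)^jx := zpow_pos (by norm_num) _
      have h1 := ofReal_rpow_anti h2jx hj1 hγneg.le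
      refine h1.trans (le_of_eq ?_)
      rw [ENNReal.ofReal_rpow_of_pos h2jx]
      congr 1
      rw [show ((2:ℝ)^(jx:ℤ)) = (2:ℝ)^((jx:ℤ):ℝ) from (Real.rpow_intCast 2 jx).symm,
        ← Real.rpow_mul (by norm_num : (0:ℝ) ≤ 2)]
    have h8 : (8:ℝ)^γ = (2:ℝ)^(3*γ) := by
      rw [show (8:ℝ) = (2:ℝ)^((3:ℕ):ℝ) by norm_num [Real.rpow_natCast],
        ← Real.rpow_mul (by norm_num : (0:ℝ) ≤ 2)]
      norm_num
    have hR' : R^γ = (2:ℝ)^(((jx:ℝ)+2)*γ) := by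
      rw [hRdef, show ((2:ℝ)^(jx+2:ℤ)) = (2:ℝ)^(((jx+2:ℤ)):ℝ) from
          (Real.rpow_intCast 2 _).symm,
        ← Real.rpow_mul (by norm_num : (0:ℝ) ≤ 2)]
      congr 1
      push_cast
      ring
    have hmγ : -γ = ((n:ℝ) - α*s)/(s-1) := by rw [hγ, hβ]; field_simp; ring
    have hexp : 3*γ + (jx:ℝ)*γ = γ + ((jx:ℝ)+2)*γ := by ring
    have hre : (s-1)/((n:ℝ) - α*s) * (8:ℝ)^γ * (2:ℝ)^((jx:ℝ)*γ)
        = (2:ℝ)^γ * (R^γ/(-γ)) := by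
      calc (s-1)/((n:ℝ) - α*s) * (8:ℝ)^γ * (2:ℝ)^((jx:ℝ)*γ)
          = (s-1)/((n:ℝ) - α*s) * ((2:ℝ)^(3*γ) * (2:ℝ)^((jx:ℝ)*γ)) := by rw [h8]; ring
        _ = (s-1)/((n:ℝ) - α*s) * (2:ℝ)^(3*γ + (jx:ℝ)*γ) := by
            rw [← Real.rpow_add (by norm_num : (0:ℝ) < 2)]
        _ = (s-1)/((n:ℝ) - α*s) * (2:ℝ)^(γ + ((jx:ℝ)+2)*γ) := by rw [hexp]
        _ = (s-1)/((n:ℝ) - α*s) * ((2:ℝ)^γ * (2:ℝ)^(((jx:ℝ)+2)*γ)) := by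
            rw [← Real.rpow_add (by norm_num : (0:ℝ) < 2)]
        _ = (2:ℝ)^γ * (R^γ/(-γ)) := by
            rw [hR', hmγ]
            field_simp
    have hkey : C * (ENNReal.ofReal ‖x - x₀‖)^γ
        ≤ ENNReal.ofReal ((2:ℝ)^γ) * ENNReal.ofReal (R^γ/(-γ)) := by
      calc C * (ENNReal.ofReal ‖x - x₀‖)^γ
          ≤ C * ENNReal.ofReal ((2:ℝ)^((jx:ℝ)*γ)) := mul_le_mul_right hx2 _
        _ = ENNReal.ofReal ((s-1)/((n:ℝ) - α*s) * (8:ℝ)^γ * (2:ℝ)^((jx:ℝ)*γ)) := by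
            rw [hC, ← ENNReal.ofReal_mul hcnn]
        _ = ENNReal.ofReal ((2:ℝ)^γ * (R^γ/(-γ))) := by rw [hre]
        _ = ENNReal.ofReal ((2:ℝ)^γ) * ENNReal.ofReal (R^γ/(-γ)) :=
            ENNReal.ofReal_mul (Real.rpow_pos_of_pos (by norm_num) γ).le
    calc C^(m+1) * (ENNReal.ofReal ‖x - x₀‖)^γ
          * ((((m+1).factorial:ℝ≥0∞))⁻¹ * S jx^(m+1))^(1/(s-1))
        = C^m * (C * (ENNReal.ofReal ‖x - x₀‖)^γ)
          * ((((m+1).factorial:ℝ≥0∞))⁻¹ * S jx^(m+1))^(1/(s-1)) := by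
          rw [pow_succ]; ring
      _ ≤ C^m * (ENNReal.ofReal ((2:ℝ)^γ) * ENNReal.ofReal (R^γ/(-γ)))
          * ((((m+1).factorial:ℝ≥0∞))⁻¹ * S jx^(m+1))^(1/(s-1)) :=
          mul_le_mul_left (mul_le_mul_right hkey _) _
      _ = C^m * ENNReal.ofReal ((2:ℝ)^γ)
            * ((((m+1).factorial:ℝ≥0∞))⁻¹ * S jx^(m+1))^(1/(s-1))
          * ENNReal.ofReal (R^γ/(-γ)) := by ring

open scoped Classical in
/-- Lemma `greenlowbd1`: with `f(y) = |y-x₀|^{(αs-n)/(s-1)}`,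
`2^{j_x} ≤ |x-x₀| < 2^{j_x+1}` and `B_k = B(x₀,2^k)`, one has for every `m ≥ 1`:
`𝒩^m(f)(x) ≥ ((s-1)/(n-αs) · 8^{(αs-n)/(s-1)})^m |x-x₀|^{(αs-n)/(s-1)}
  ((1/m!) (Σ_{k=-∞}^{j_x} 2^{k(αs-n)} σ(B_{k+1} \ B_k))^m)^{1/(s-1)}`. -/
theorem statement8 (n : ℕ) (hn : 2 ≤ n) (α s : ℝ) (hs : 1 < s) (hα : 0 < α)
    (hαs : α * s < n)
    (σ : Measure (En n)) [IsLocallyFiniteMeasure σ]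
    (x₀ x : En n) (hx : x ≠ x₀) (jx : ℤ)
    (hjx₁ : (2:ℝ)^jx ≤ ‖x - x₀‖) (hjx₂ : ‖x - x₀‖ < (2:ℝ)^(jx+1))
    (m : ℕ) (hm : 1 ≤ m) :
    ENNReal.ofReal (((s-1)/((n:ℝ) - α*s)) * (8:ℝ) ^ ((α*s-(n:ℝ))/(s-1))) ^ m
        * (ENNReal.ofReal ‖x - x₀‖) ^ ((α*s-(n:ℝ))/(s-1))
        * (((m.factorial : ℝ≥0∞))⁻¹
            * (∑' k : ℤ, if k ≤ jx then
                  ENNReal.ofReal ((2:ℝ) ^ ((k:ℝ) * (α*s-(n:ℝ))))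
                    * σ (Metric.ball x₀ ((2:ℝ)^(k+1)) \ Metric.ball x₀ ((2:ℝ)^k))
                else 0) ^ m) ^ (1/(s-1))
      ≤ (Nop n α s σ)^[m]
          (fun y => (ENNReal.ofReal ‖y - x₀‖) ^ ((α*s-(n:ℝ))/(s-1))) x := by
  exact key_induction n α s hs hα hαs σ x₀ m x hx jx hjx₁ hjx₂
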